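/- Let A and B be n×n complex positive definite matrices with A ≤ B in the Loewner order, and let p ∈ (0,1]. Then K_p(A,B) ≤ T_p(A|B) ≤ (1/2)·(A #_p B − A ♮_{p−1} B + B − A) in the Loewner order. -/

import Mathlib

open Matrix ComplexOrder

/-- Real power of a (Hermitian) complex matrix via the continuous functional calculus,
corresponding to `Matrix.PosDef.rpow` on positive definite matrices. -/
noncomputable def mrpow {n : Type*} [Fintype n] [DecidableEq n]
    (A : Matrix n n ℂ) (r : ℝ) : Matrix n n ℂ :=
  cfc (fun t : ℝ => t ^ r) A

/-- The Loewner order: `loe X Y` means `Y - X` is positive semidefinite. -/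
def loe {n : Type*} [Fintype n] (X Y : Matrix n n ℂ) : Prop :=
  (Y - X).PosSemidef

/-- `A ♮ᵣ B = A^{1/2} (A^{-1/2} B A^{-1/2})^r A^{1/2}`; for `r ∈ [0,1]` this is the
weighted geometric mean `A #ᵣ B`. -/
noncomputable def natu {n : Type*} [Fintype n] [DecidableEq n]
    (A B : Matrix n n ℂ) (r : ℝ) : Matrix n n ℂ :=
  mrpow A (1 / 2) * mrpow (mrpow A (-(1 / 2)) * B * mrpow A (-(1 / 2))) r * mrpow A (1 / 2)

/-- The Tsallis relative operator entropy `T_p(A|B) = (A #_p B - A) / p`. -/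
noncomputable def TsallisEntropy {n : Type*} [Fintype n] [DecidableEq n]
    (A B : Matrix n n ℂ) (p : ℝ) : Matrix n n ℂ :=
  (1 / p : ℝ) • (natu A B p - A)

/-- `K_p(A,B) = A^{1/2} ((A^{-1/2} B A^{-1/2} + I)/2)^{p-1} (A^{-1/2} B A^{-1/2} - I) A^{1/2}`. -/
noncomputable def Kp {n : Type*} [Fintype n] [DecidableEq n]
    (A B : Matrix n n ℂ) (p : ℝ) : Matrix n n ℂ :=
  mrpow A (1 / 2) *
    mrpow ((1 / 2 : ℝ) • (mrpow A (-(1 / 2)) * B * mrpow A (-(1 / 2)) + 1)) (p - 1) *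
    (mrpow A (-(1 / 2)) * B * mrpow A (-(1 / 2)) - 1) * mrpow A (1 / 2)

open Pointwise


-- scalar: Bernoulli for negative exponent
lemma bern {q u : ℝ} (hq0 : -1 ≤ q) (hq1 : q ≤ 0) (hu : 0 < u) :
    1 + q * (u - 1) ≤ u ^ q := by
  rcases le_or_gt (1 + q * (u - 1)) 0 with h | h
  · exact h.trans (Real.rpow_pos_of_pos hu q).le
  · have key := rpow_one_add_le_one_add_mul_self (s := u - 1) (by linarith) (p := -q)
      (by linarith) (by linarith)
    rw [show (1 : ℝ) + (u - 1) = u by ring] at key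
    have hpos : 0 < u ^ (-q) := Real.rpow_pos_of_pos hu _
    have huq : u ^ q = (u ^ (-q))⁻¹ := by
      rw [Real.rpow_neg hu.le, inv_inv]
    rw [huq, le_inv_comm₀ h hpos]
    have h2 : (1 + q * (u - 1)) * (1 + q * (u - 1))⁻¹ = 1 := mul_inv_cancel₀ h.ne'
    nlinarith [key, h, inv_pos.2 h, sq_nonneg (q * (u - 1))]

lemma tangent {q a b : ℝ} (hq0 : -1 ≤ q) (hq1 : q ≤ 0) (ha : 0 < a) (hb : 0 < b) :
    a ^ q + q * a ^ (q - 1) * (b - a) ≤ b ^ q := by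
  have h := bern hq0 hq1 (div_pos hb ha)
  have haq : 0 < a ^ q := Real.rpow_pos_of_pos ha q
  have hmul : (b / a) ^ q * a ^ q = b ^ q := by
    rw [← Real.mul_rpow (by positivity) ha.le, div_mul_cancel₀ _ ha.ne']
  have hsub : a ^ (q - 1) = a ^ q / a := by
    rw [Real.rpow_sub ha, Real.rpow_one]
  have h2 := mul_le_mul_of_nonneg_right h haq.le
  rw [hmul] at h2
  calc a ^ q + q * a ^ (q - 1) * (b - a)
      = (1 + q * (b / a - 1)) * a ^ q := by
        rw [hsub]; field_simp
    _ ≤ b ^ q := h2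

lemma scalar1 {p x : ℝ} (hp0 : 0 < p) (hp1 : p ≤ 1) (hx : 1 ≤ x) :
    ((x + 1) / 2) ^ (p - 1) * (x - 1) ≤ (x ^ p - 1) / p := by
  set F : ℝ → ℝ := fun y => (y ^ p - 1) / p - ((y + 1) / 2) ^ (p - 1) * (y - 1) with hF
  set F' : ℝ → ℝ := fun y => p * y ^ (p - 1) / p -
      ((p - 1) * ((y + 1) / 2) ^ (p - 1 - 1) * (1 / 2) * (y - 1) + ((y + 1) / 2) ^ (p - 1) * 1)
    with hF'
  have hderiv : ∀ y ∈ Set.Ici (1 : ℝ), HasDerivAt F (F' y) y := by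
    intro y hy
    have hy0 : (0 : ℝ) < y := lt_of_lt_of_le one_pos hy
    have hm0 : (0 : ℝ) < (y + 1) / 2 := by linarith
    have h1 : HasDerivAt (fun z : ℝ => (z ^ p - 1) / p) (p * y ^ (p - 1) / p) y :=
      ((Real.hasDerivAt_rpow_const (Or.inl hy0.ne')).sub_const 1).div_const p
    have h2 : HasDerivAt (fun z : ℝ => (z + 1) / 2) (1 / 2) y := by
      simpa using ((hasDerivAt_id y).add_const 1).div_const 2
    have h3 : HasDerivAt (fun z : ℝ => ((z + 1) / 2) ^ (p - 1))
        ((p - 1) * ((y + 1) / 2) ^ (p - 1 - 1) * (1 / 2)) y := by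
      have := h2.rpow_const (p := p - 1) (Or.inl hm0.ne')
      convert this using 1
      ring
    have h4 := h3.mul ((hasDerivAt_id y).sub_const 1)
    have h5 := h1.sub h4
    rw [hF, hF']
    exact h5
  have hmono : MonotoneOn F (Set.Ici (1 : ℝ)) := by
    apply monotoneOn_of_deriv_nonneg (convex_Ici 1)
      (fun y hy => (hderiv y hy).continuousAt.continuousWithinAt)
      (fun y hy => (hderiv y (interior_subset hy)).differentiableAt.differentiableWithinAt)
    intro y hy
    rw [interior_Ici] at hy
    have hy1 : (1 : ℝ) < y := hy
    have hy0 : (0 : ℝ) < y := by linarith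
    have hm0 : (0 : ℝ) < (y + 1) / 2 := by linarith
    rw [(hderiv y (le_of_lt hy1)).deriv]
    have htan := tangent (q := p - 1) (by linarith) (by linarith) hm0 hy0
    have hcan : p * y ^ (p - 1) / p = y ^ (p - 1) := by
      field_simp
    rw [hF']
    simp only
    rw [hcan]
    have : p - 1 - 1 = p - 2 := by ring
    rw [this]
    rw [show p - 1 - 1 = p - 2 by ring] at htan
    nlinarith [htan]
  have h0 : F 1 = 0 := by
    simp [hF, Real.one_rpow]
  have := hmono (Set.self_mem_Ici) hx hx
  rw [h0] at this
  simp only [hF] at this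
  linarith

lemma scalar2 {p x : ℝ} (hp0 : 0 < p) (hp1 : p ≤ 1) (hx : 1 ≤ x) :
    (x ^ p - 1) / p ≤ (x ^ p - x ^ (p - 1) + x - 1) / 2 := by
  set G : ℝ → ℝ := fun y => (y ^ p - y ^ (p - 1) + y - 1) / 2 - (y ^ p - 1) / p with hG
  set G' : ℝ → ℝ := fun y =>
      (p * y ^ (p - 1) - (p - 1) * y ^ (p - 1 - 1) + 1) / 2 - p * y ^ (p - 1) / p with hG'
  have hderiv : ∀ y ∈ Set.Ici (1 : ℝ), HasDerivAt G (G' y) y := by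
    intro y hy
    have hy0 : (0 : ℝ) < y := lt_of_lt_of_le one_pos hy
    have h1 : HasDerivAt (fun z : ℝ => z ^ p) (p * y ^ (p - 1)) y :=
      Real.hasDerivAt_rpow_const (Or.inl hy0.ne')
    have h2 : HasDerivAt (fun z : ℝ => z ^ (p - 1)) ((p - 1) * y ^ (p - 1 - 1)) y :=
      Real.hasDerivAt_rpow_const (Or.inl hy0.ne')
    have h3 := (((h1.sub h2).add (hasDerivAt_id y)).sub_const 1).div_const 2
    have h4 : HasDerivAt (fun z : ℝ => (z ^ p - 1) / p) (p * y ^ (p - 1) / p) y :=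
      (h1.sub_const 1).div_const p
    have h5 := h3.sub h4
    rw [hG, hG']
    exact h5
  have hmono : MonotoneOn G (Set.Ici (1 : ℝ)) := by
    apply monotoneOn_of_deriv_nonneg (convex_Ici 1)
      (fun y hy => (hderiv y hy).continuousAt.continuousWithinAt)
      (fun y hy => (hderiv y (interior_subset hy)).differentiableAt.differentiableWithinAt)
    intro y hy
    rw [interior_Ici] at hy
    have hy1 : (1 : ℝ) < y := hy
    have hy0 : (0 : ℝ) < y := by linarith
    rw [(hderiv y (le_of_lt hy1)).deriv]
    have htan := tangent (q := p - 1) (by linarith) (by linarith) hy0 one_pos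
    rw [Real.one_rpow] at htan
    have hdy : y ^ (p - 1 - 1) * y = y ^ (p - 1) := by
      rw [← Real.rpow_add_one hy0.ne' (p - 1 - 1)]
      norm_num
    have hcan : p * y ^ (p - 1) / p = y ^ (p - 1) := by field_simp
    rw [hG']
    simp only
    rw [hcan]
    rw [show p - 1 - 1 = p - 2 by ring] at hdy ⊢
    rw [show p - 1 - 1 = p - 2 by ring] at htan
    nlinarith [htan, hdy]
  have h0 : G 1 = 0 := by
    simp [hG, Real.one_rpow]
  have := hmono (Set.self_mem_Ici) hx hx
  rw [h0] at this
  simp only [hG] at this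
  linarith

section helpers
variable {n : Type*} [Fintype n] [DecidableEq n]

lemma fincont (f : ℝ → ℝ) (M : Matrix n n ℂ) : ContinuousOn f (spectrum ℝ M) :=
  (Matrix.finite_real_spectrum (A := M)).continuousOn f

lemma fincont' (f g : ℝ → ℝ) (M : Matrix n n ℂ) : ContinuousOn f (g '' spectrum ℝ M) :=
  ((Matrix.finite_real_spectrum (A := M)).image g).continuousOn f

lemma psd_cfc {M : Matrix n n ℂ} (hM : M.IsHermitian) {f : ℝ → ℝ}
    (hf : ∀ t ∈ spectrum ℝ M, 0 ≤ f t) : (cfc f M).PosSemidef := by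
  rw [hM.cfc_eq]
  unfold Matrix.IsHermitian.cfc
  rw [Unitary.conjStarAlgAut_apply, Matrix.star_eq_conjTranspose]
  refine Matrix.PosSemidef.mul_mul_conjTranspose_same ?_ _
  refine Matrix.posSemidef_diagonal_iff.mpr fun i => ?_
  have : (0:ℝ) ≤ f (hM.eigenvalues i) := hf _ (hM.eigenvalues_mem_spectrum_real i)
  simp only [Function.comp_apply]
  exact RCLike.ofReal_nonneg.mpr this

lemma spec_ge_one {C : Matrix n n ℂ} (h1 : (C - 1).PosSemidef) :
    ∀ t ∈ spectrum ℝ C, (1:ℝ) ≤ t := by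
  intro t ht
  have hmem : t - 1 ∈ spectrum ℝ C - {(1:ℝ)} := Set.sub_mem_sub ht rfl
  rw [spectrum.sub_singleton_eq, _root_.map_one (algebraMap ℝ (Matrix n n ℂ))] at hmem
  rw [Matrix.IsHermitian.spectrum_real_eq_range_eigenvalues h1.1] at hmem
  obtain ⟨i, hi⟩ := hmem
  have := h1.eigenvalues_nonneg i
  rw [hi] at this
  linarith

lemma herm_of_sub_one_psd {C : Matrix n n ℂ} (h1 : (C - 1).PosSemidef) : C.IsHermitian := by
  have : C = (C - 1) + 1 := by abel
  rw [this]
  exact h1.1.add Matrix.isHermitian_one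

end helpers

section core
variable {n : Type*} [Fintype n] [DecidableEq n]

lemma core {S C : Matrix n n ℂ} (hS : S.IsHermitian) (hC : IsSelfAdjoint C)
    {f g : ℝ → ℝ} (hfg : ∀ t ∈ spectrum ℝ C, f t ≤ g t) :
    (S * cfc g C * S - S * cfc f C * S).PosSemidef := by
  have hCh : C.IsHermitian := hC
  have e : S * cfc g C * S - S * cfc f C * S = S * cfc (fun t => g t - f t) C * Sᴴ := by
    rw [cfc_sub (fun t : ℝ => g t) (fun t : ℝ => f t) C (fincont g C) (fincont f C), hS.eq]
    noncomm_ring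
  rw [e]
  exact (psd_cfc hCh fun t ht => sub_nonneg.mpr (hfg t ht)).mul_mul_conjTranspose_same S

lemma spec_pos {A : Matrix n n ℂ} (hA : A.PosDef) : ∀ t ∈ spectrum ℝ A, 0 < t := by
  intro t ht
  rw [Matrix.IsHermitian.spectrum_real_eq_range_eigenvalues hA.1] at ht
  obtain ⟨i, hi⟩ := ht
  rw [← hi]
  exact hA.eigenvalues_pos i

lemma mrpow_mul_mrpow {A : Matrix n n ℂ} (hA : A.PosDef) (r s : ℝ) :
    mrpow A r * mrpow A s = mrpow A (r + s) := by
  unfold mrpow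
  rw [← cfc_mul _ _ A (fincont _ A) (fincont _ A)]
  exact cfc_congr fun t ht => (Real.rpow_add (spec_pos hA t ht) r s).symm

lemma mrpow_zero {A : Matrix n n ℂ} (hA : A.PosDef) : mrpow A 0 = 1 := by
  unfold mrpow
  have hA' : IsSelfAdjoint A := hA.1
  rw [cfc_congr (g := fun _ : ℝ => (1:ℝ)) fun t _ => Real.rpow_zero t]
  exact cfc_const_one ℝ A

lemma mrpow_one' {A : Matrix n n ℂ} (hA : A.PosDef) : mrpow A 1 = A := by
  unfold mrpow
  have hA' : IsSelfAdjoint A := hA.1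
  rw [cfc_congr (g := fun t : ℝ => t) fun t _ => Real.rpow_one t]
  exact cfc_id' ℝ A

lemma mrpow_isHermitian (A : Matrix n n ℂ) (r : ℝ) : (mrpow A r).IsHermitian :=
  (cfc_predicate (fun t : ℝ => t ^ r) A : IsSelfAdjoint _)

end core

theorem stmt7 {n : Type*} [Fintype n] [DecidableEq n] {A B : Matrix n n ℂ}
    (hA : A.PosDef) (hB : B.PosDef) (hAB : loe A B)
    {p : ℝ} (hp0 : 0 < p) (hp1 : p ≤ 1) :
    loe (Kp A B p) (TsallisEntropy A B p) ∧
    loe (TsallisEntropy A B p)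
      ((1 / 2 : ℝ) • (natu A B p - natu A B (p - 1) + B - A)) := by
  have hA' : IsSelfAdjoint A := hA.1
  simp only [Kp, TsallisEntropy, natu, loe]
  set S := mrpow A (1 / 2) with hSdef
  set S' := mrpow A (-(1 / 2)) with hS'def
  set C := S' * B * S' with hCdef
  have hSh : IsSelfAdjoint S := cfc_predicate _ A
  have hS'h : IsSelfAdjoint S' := cfc_predicate _ A
  have hShe : Sᴴ = S := by rw [← Matrix.star_eq_conjTranspose]; exact hSh.star_eq
  have hS'he : S'ᴴ = S' := by rw [← Matrix.star_eq_conjTranspose]; exact hS'h.star_eq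
  have hSS' : S * S' = 1 := by
    rw [hSdef, hS'def, mrpow_mul_mrpow hA, show (1/2 : ℝ) + -(1/2) = 0 by norm_num,
      mrpow_zero hA]
  have hS'S : S' * S = 1 := by
    rw [hSdef, hS'def, mrpow_mul_mrpow hA, show -(1/2 : ℝ) + 1/2 = 0 by norm_num,
      mrpow_zero hA]
  have hSS : S * S = A := by
    rw [hSdef, mrpow_mul_mrpow hA, show (1/2 : ℝ) + 1/2 = 1 by norm_num, mrpow_one' hA]
  have hS'AS' : S' * A * S' = 1 := by
    rw [← hSS, show S' * (S * S) * S' = (S' * S) * (S * S') by noncomm_ring, hS'S, hSS',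
      one_mul]
  have hC1 : (C - 1).PosSemidef := by
    have hBA : (B - A).PosSemidef := hAB
    have h := hBA.mul_mul_conjTranspose_same S'
    rw [hS'he] at h
    rw [show S' * (B - A) * S' = S' * B * S' - S' * A * S' by noncomm_ring, hS'AS',
      ← hCdef] at h
    exact h
  have hCh : C.IsHermitian := herm_of_sub_one_psd hC1
  have hCsa : IsSelfAdjoint C := hCh
  have hspec := spec_ge_one hC1
  have hc : ∀ f : ℝ → ℝ, ContinuousOn f (spectrum ℝ C) := fun f => fincont f C
  -- Tsallis in cfc form
  have eT : (1 / p : ℝ) • (S * mrpow C p * S - A)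
      = S * cfc (fun t : ℝ => (1 / p) * (t ^ p - 1)) C * S := by
    rw [cfc_const_mul _ _ C (hc _),
      cfc_sub (fun t : ℝ => t ^ p) (fun _ : ℝ => 1) C (hc _) (hc _),
      cfc_const_one ℝ C]
    rw [mul_smul_comm, smul_mul_assoc]
    congr 1
    rw [show mrpow C p = cfc (fun t : ℝ => t ^ p) C from rfl, ← hSS]
    noncomm_ring
  -- Kp in cfc form
  have eK : S * mrpow ((1 / 2 : ℝ) • (C + 1)) (p - 1) * (C - 1) * S
      = S * cfc (fun t : ℝ => ((1 / 2) * (t + 1)) ^ (p - 1) * (t - 1)) C * S := by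
    have e2 : (1 / 2 : ℝ) • (C + 1) = cfc (fun t : ℝ => (1 / 2 : ℝ) * (t + 1)) C := by
      rw [cfc_const_mul _ _ C (hc _), cfc_add_const 1 _ C (hc _) hCsa, cfc_id' ℝ C,
        _root_.map_one]
    have e3 : mrpow ((1 / 2 : ℝ) • (C + 1)) (p - 1)
        = cfc (fun t : ℝ => ((1 / 2 : ℝ) * (t + 1)) ^ (p - 1)) C := by
      rw [e2]
      have hcomp := cfc_comp (R := ℝ) (fun s : ℝ => s ^ (p - 1))
        (fun t : ℝ => (1 / 2 : ℝ) * (t + 1)) C hCsa (fincont' _ _ C) (hc _)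
      rw [show mrpow (cfc (fun t : ℝ => (1 / 2 : ℝ) * (t + 1)) C) (p - 1)
        = cfc (fun s : ℝ => s ^ (p - 1)) (cfc (fun t : ℝ => (1 / 2 : ℝ) * (t + 1)) C)
        from rfl, ← hcomp]
      rfl
    have e4 : cfc (fun t : ℝ => t - 1) C = C - 1 := by
      rw [cfc_sub (fun t : ℝ => t) (fun _ : ℝ => 1) C (hc _) (hc _), cfc_id' ℝ C,
        cfc_const_one ℝ C]
    rw [e3, ← e4, mul_assoc S _ _,
      ← cfc_mul (fun t : ℝ => ((1 / 2 : ℝ) * (t + 1)) ^ (p - 1)) (fun t : ℝ => t - 1) C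
        (hc _) (hc _)]
  -- B in cfc form
  have eB : S * C * S = B := by
    rw [hCdef, show S * (S' * B * S') * S = (S * S') * B * (S' * S) by noncomm_ring,
      hSS', hS'S, one_mul, mul_one]
  -- RHS in cfc form
  have eR : (1 / 2 : ℝ) • (S * mrpow C p * S - S * mrpow C (p - 1) * S + B - A)
      = S * cfc (fun t : ℝ => (1 / 2) * (t ^ p - t ^ (p - 1) + t - 1)) C * S := by
    rw [cfc_const_mul _ _ C (hc _),
      cfc_sub (fun t : ℝ => t ^ p - t ^ (p - 1) + t) (fun _ : ℝ => 1) C (hc _) (hc _),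
      cfc_add (a := C) (fun t : ℝ => t ^ p - t ^ (p - 1)) (fun t : ℝ => t) (hc _) (hc _),
      cfc_sub (fun t : ℝ => t ^ p) (fun t : ℝ => t ^ (p - 1)) C (hc _) (hc _),
      cfc_id' ℝ C, cfc_const_one ℝ C]
    rw [mul_smul_comm, smul_mul_assoc]
    congr 1
    rw [show mrpow C p = cfc (fun t : ℝ => t ^ p) C from rfl,
      show mrpow C (p - 1) = cfc (fun t : ℝ => t ^ (p - 1)) C from rfl, ← eB, ← hSS]
    noncomm_ring
  constructor
  · rw [eT, eK]
    have hSherm : S.IsHermitian := hSh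
    refine core hSherm hCsa fun t ht => ?_
    have h1 := scalar1 hp0 hp1 (hspec t ht)
    rw [show ((t + 1) / 2 : ℝ) = (1 / 2) * (t + 1) by ring] at h1
    have hrw : ((t ^ p - 1) / p : ℝ) = (1 / p) * (t ^ p - 1) := by ring
    linarith [h1, hrw.le, hrw.ge]
  · rw [eT, eR]
    have hSherm : S.IsHermitian := hSh
    refine core hSherm hCsa fun t ht => ?_
    have h2 := scalar2 hp0 hp1 (hspec t ht)
    have hrw : ((t ^ p - 1) / p : ℝ) = (1 / p) * (t ^ p - 1) := by ring
    have hrw2 : ((t ^ p - t ^ (p - 1) + t - 1) / 2 : ℝ)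
        = (1 / 2) * (t ^ p - t ^ (p - 1) + t - 1) := by ring
    linarith [h2, hrw.le, hrw.ge, hrw2.le, hrw2.ge]
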